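/- arXiv:2310.15756 — 7 statements merged into one kernel-verified Lean document; each statement's English description precedes it below -/
import Mathlib

section
/- Fix λ > 0 and a > 1. For E ∈ (0,1), let s(E) be the unique real number s > λ satisfying (s − λ)·log(s/λ) = a·log(1/E), and set η(E) := ⌊s(E)⌋. Then lim_{E → 0⁺} (log η(E)) / (log log(1/E)) = 1. -/
open Filter

set_option maxHeartbeats 800000 in
theorem log_floor_solution_asymptotic {lam a : ℝ} (hlam : 0 < lam) (ha : 1 < a)
    (s : ℝ → ℝ)
    (hs : ∀ E ∈ Set.Ioo (0 : ℝ) 1,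
      lam < s E ∧ (s E - lam) * Real.log (s E / lam) = a * Real.log (1 / E)) :
    Tendsto (fun E : ℝ => Real.log ((⌊s E⌋ : ℝ)) / Real.log (Real.log (1 / E)))
      (nhdsWithin 0 (Set.Ioi 0)) (nhds 1) := by
  have ha0 : (0:ℝ) < a := lt_trans one_pos ha
  have hL : Tendsto (fun E : ℝ => Real.log (1 / E)) (nhdsWithin 0 (Set.Ioi 0)) atTop := by
    have h1 : Tendsto (fun E : ℝ => -Real.log E) (nhdsWithin 0 (Set.Ioi 0)) atTop :=
      tendsto_neg_atBot_atTop.comp Real.tendsto_log_nhdsGT_zero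
    simpa [one_div, Real.log_inv] using h1
  rw [Metric.tendsto_nhds]
  intro ε hε
  set δ : ℝ := min ε 1 / 4 with hδdef
  have hδ0 : 0 < δ := div_pos (lt_min hε one_pos) (by norm_num)
  have hδε : δ ≤ ε / 4 := by
    have : min ε 1 ≤ ε := min_le_left _ _
    rw [hδdef]; linarith
  have hδ1 : δ ≤ 1 / 4 := by
    have : min ε 1 ≤ 1 := min_le_right _ _
    rw [hδdef]; linarith
  -- eventual facts about t
  have key : ∀ᶠ t : ℝ in atTop,
      1 < t ∧ lam + a * t ≤ t ^ ((1:ℝ)+δ) ∧ t ^ ((1:ℝ)-δ) * (2 * Real.log t) < a * t ∧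
      1 + t / lam ≤ t ^ (2:ℕ) ∧ 2 * lam ≤ t ^ ((1:ℝ)-δ) ∧
      t ^ ((1:ℝ)-2*δ) + 1 ≤ t ^ ((1:ℝ)-δ) ∧ 1 ≤ t ^ ((1:ℝ)-2*δ) ∧ t ^ ((1:ℝ)-δ) ≤ t := by
    have h1 : ∀ᶠ t : ℝ in atTop, 1 < t := eventually_gt_atTop 1
    have h2 : ∀ᶠ t : ℝ in atTop, lam + a ≤ t ^ δ :=
      (tendsto_rpow_atTop hδ0).eventually_ge_atTop (lam + a)
    have h3 : ∀ᶠ t : ℝ in atTop, Real.log t ≤ a / 4 * t ^ δ := by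
      have := (isLittleO_log_rpow_atTop hδ0).def (show (0:ℝ) < a/4 by positivity)
      filter_upwards [this, eventually_gt_atTop 1] with t ht ht1
      have h0 : (0:ℝ) < t := by linarith
      rw [Real.norm_eq_abs, Real.norm_eq_abs, abs_of_nonneg (Real.log_nonneg (le_of_lt ht1)),
        abs_of_nonneg (le_of_lt (Real.rpow_pos_of_pos h0 δ))] at ht
      exact ht
    have h4 : ∀ᶠ t : ℝ in atTop, 2 ≤ t ∧ 2 / lam ≤ t :=
      (eventually_ge_atTop 2).and (eventually_ge_atTop (2/lam))
    have h5 : ∀ᶠ t : ℝ in atTop, 2 * lam ≤ t ^ ((1:ℝ)-δ) :=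
      (tendsto_rpow_atTop (by linarith : (0:ℝ) < 1 - δ)).eventually_ge_atTop (2*lam)
    have h6 : ∀ᶠ t : ℝ in atTop, 2 ≤ t ^ δ :=
      (tendsto_rpow_atTop hδ0).eventually_ge_atTop 2
    filter_upwards [h1, h2, h3, h4, h5, h6] with t ht1 ht2 ht3 ht4 ht5 ht6
    have ht0 : (0:ℝ) < t := by linarith
    have htδ : (0:ℝ) < t ^ δ := Real.rpow_pos_of_pos ht0 δ
    have ht1' : (0:ℝ) < t ^ ((1:ℝ)-δ) := Real.rpow_pos_of_pos ht0 _
    have ht2' : (0:ℝ) < t ^ ((1:ℝ)-2*δ) := Real.rpow_pos_of_pos ht0 _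
    have hid1 : t ^ ((1:ℝ)+δ) = t * t ^ δ := by
      rw [Real.rpow_add ht0, Real.rpow_one]
    have hid2 : t ^ ((1:ℝ)-δ) * t ^ δ = t := by
      rw [← Real.rpow_add ht0, sub_add_cancel, Real.rpow_one]
    have hid3 : t ^ ((1:ℝ)-2*δ) * t ^ δ = t ^ ((1:ℝ)-δ) := by
      rw [← Real.rpow_add ht0]; ring_nf
    have hone : (1:ℝ) ≤ t ^ ((1:ℝ)-2*δ) := by
      have := Real.rpow_le_rpow_of_exponent_le (le_of_lt ht1)
        (show (0:ℝ) ≤ 1 - 2*δ by linarith)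
      rwa [Real.rpow_zero] at this
    refine ⟨ht1, ?_, ?_, ?_, ht5, ?_, hone, ?_⟩
    · rw [hid1]
      nlinarith
    · have : t ^ ((1:ℝ)-δ) * (2 * Real.log t) ≤ t ^ ((1:ℝ)-δ) * (a/2 * t ^ δ) := by
        have hlog : 2 * Real.log t ≤ a/2 * t ^ δ := by linarith
        exact mul_le_mul_of_nonneg_left hlog (le_of_lt ht1')
      have h' : t ^ ((1:ℝ)-δ) * (a/2 * t ^ δ) = a/2 * t := by
        rw [show t ^ ((1:ℝ)-δ) * (a/2 * t ^ δ) = a/2 * (t ^ ((1:ℝ)-δ) * t ^ δ) by ring, hid2]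
      nlinarith
    · obtain ⟨h2t, h2l⟩ := ht4
      have hlt : 2 ≤ lam * t := by
        rw [div_le_iff₀ hlam] at h2l; linarith [h2l]
      have h7 : t / lam ≤ t ^ (2:ℕ) / 2 := by
        rw [div_le_div_iff₀ hlam (by norm_num : (0:ℝ) < 2)]
        nlinarith [mul_le_mul_of_nonneg_left hlt ht0.le]
      nlinarith [mul_le_mul h2t h2t (by norm_num : (0:ℝ) ≤ 2) ht0.le]
    · nlinarith
    · have := Real.rpow_le_rpow_of_exponent_le (le_of_lt ht1)
        (show (1:ℝ) - δ ≤ 1 by linarith)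
      rwa [Real.rpow_one] at this
  have hmem : Set.Ioo (0:ℝ) 1 ∈ nhdsWithin (0:ℝ) (Set.Ioi 0) :=
    Ioo_mem_nhdsGT_of_mem (by constructor <;> norm_num)
  filter_upwards [hmem, hL.eventually key] with E hE hkey
  obtain ⟨ht1, hup, hlt3, hq, h2lam, hsum, hone, hle⟩ := hkey
  set t := Real.log (1/E) with htdef
  obtain ⟨hslam, heq⟩ := hs E hE
  have ht0 : (0:ℝ) < t := by linarith
  have hlogt : 0 < Real.log t := Real.log_pos ht1
  have ht1' : (0:ℝ) < t ^ ((1:ℝ)-δ) := Real.rpow_pos_of_pos ht0 _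
  -- lower bound on s E
  have hX : t ^ ((1:ℝ)-δ) < s E - lam := by
    by_contra h
    push_neg at h
    have hratio : (1:ℝ) < s E / lam := (one_lt_div hlam).mpr hslam
    have hlognn : 0 ≤ Real.log (s E / lam) := Real.log_nonneg (le_of_lt hratio)
    have hub : s E / lam ≤ t ^ (2:ℕ) := by
      rw [div_le_iff₀ hlam]
      have h1 : s E ≤ lam + t ^ ((1:ℝ)-δ) := by linarith
      have h2 : lam + t ^ ((1:ℝ)-δ) ≤ lam + t := by linarith
      have h3 : lam * (1 + t / lam) ≤ lam * t ^ (2:ℕ) := by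
        exact mul_le_mul_of_nonneg_left hq (le_of_lt hlam)
      have h4 : lam * (1 + t / lam) = lam + t := by field_simp
      linarith
    have hlog2 : Real.log (s E / lam) ≤ 2 * Real.log t := by
      have := Real.log_le_log (by positivity) hub
      rwa [Real.log_pow, Nat.cast_ofNat] at this
    have hprod : (s E - lam) * Real.log (s E / lam) ≤ t ^ ((1:ℝ)-δ) * (2 * Real.log t) := by
      apply mul_le_mul h (by linarith) hlognn (le_of_lt ht1')
    rw [heq] at hprod
    linarith
  -- upper bound on s E
  have hlog1 : (1:ℝ) ≤ Real.log (s E / lam) := by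
    rw [Real.le_log_iff_exp_le (div_pos (lt_trans hlam hslam) hlam)]
    have he3 : Real.exp 1 ≤ 3 := le_of_lt (lt_of_lt_of_le Real.exp_one_lt_d9 (by norm_num))
    have h3 : (3:ℝ) ≤ s E / lam := by
      rw [le_div_iff₀ hlam]
      linarith
    linarith
  have hs_up : s E ≤ t ^ ((1:ℝ)+δ) := by
    have hpos : 0 < s E - lam := by linarith
    have hexp : (s E - lam) * (Real.log (s E / lam) - 1) = a * t - (s E - lam) := by
      rw [mul_sub, heq]; ring
    have := mul_nonneg hpos.le (sub_nonneg.mpr hlog1)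
    linarith
  -- floor bounds
  have hfl : s E - 1 < (⌊s E⌋ : ℝ) := Int.sub_one_lt_floor (s E)
  have hfloor_lb : t ^ ((1:ℝ)-2*δ) < (⌊s E⌋ : ℝ) := by linarith
  have hfloor_pos : (0:ℝ) < (⌊s E⌋ : ℝ) := by linarith
  have hfloor_ub : (⌊s E⌋ : ℝ) ≤ s E := Int.floor_le (s E)
  have hlb : (1 - 2*δ) * Real.log t ≤ Real.log ((⌊s E⌋ : ℝ)) := by
    rw [← Real.log_rpow ht0]
    exact Real.log_le_log (by positivity) (le_of_lt hfloor_lb)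
  have hub' : Real.log ((⌊s E⌋ : ℝ)) ≤ (1 + δ) * Real.log t := by
    rw [← Real.log_rpow ht0]
    exact Real.log_le_log hfloor_pos (le_trans hfloor_ub hs_up)
  rw [Real.dist_eq, abs_lt]
  have h1 : 1 - 2*δ ≤ Real.log ((⌊s E⌋ : ℝ)) / Real.log t := (le_div_iff₀ hlogt).mpr (by linarith)
  have h2 : Real.log ((⌊s E⌋ : ℝ)) / Real.log t ≤ 1 + δ := (div_le_iff₀ hlogt).mpr (by linarith)
  constructor
  · linarith
  · linarith
end

section
/- Fix λ > 0 and a > 1. For E ∈ (0,1), let s(E) be the unique real number s > λ satisfying (s − λ)·log(s/λ) = a·log(1/E), and set η(E) := ⌊s(E)⌋. Then lim_{E → 0⁺} η(E) · (log log(1/E)) / (a·log(1/E)) = 1. -/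
open Filter

private lemma aux_log_div : Tendsto (fun x : ℝ => Real.log x / x) atTop (nhds 0) := by
  simpa using Real.tendsto_pow_log_div_mul_add_atTop 1 0 1 one_ne_zero

private lemma aux_T : Tendsto (fun E : ℝ => Real.log (1/E))
    (nhdsWithin (0:ℝ) (Set.Ioi 0)) atTop := by
  have h := Real.tendsto_log_nhdsGT_zero
  have := tendsto_neg_atBot_atTop.comp h
  simpa [Function.comp_def, one_div, Real.log_inv] using this

private lemma aux_W {b : ℝ} (hb : 0 < b) :
    Tendsto (fun t : ℝ => Real.log (Real.log (b*t)) / Real.log t) atTop (nhds 0) := by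
  have hupper : Tendsto (fun t : ℝ => (Real.log 2 + Real.log (Real.log t)) / Real.log t)
      atTop (nhds 0) := by
    have hinner : Tendsto (fun u : ℝ => (Real.log 2 + Real.log u) / u) atTop (nhds 0) := by
      have h1 : Tendsto (fun u : ℝ => Real.log 2 * u⁻¹) atTop (nhds 0) := by
        simpa using tendsto_inv_atTop_zero.const_mul (Real.log 2)
      have h2 := h1.add aux_log_div
      simpa using h2.congr (fun u => by ring)
    have := hinner.comp Real.tendsto_log_atTop
    simpa [Function.comp_def] using this
  refine tendsto_of_tendsto_of_tendsto_of_le_of_le' tendsto_const_nhds hupper ?_ ?_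
  · filter_upwards [eventually_ge_atTop (Real.exp 1 / b), eventually_gt_atTop (1:ℝ)] with t h1 h2
    have hbt : Real.exp 1 ≤ b * t := by
      rw [div_le_iff₀ hb] at h1; linarith
    have h3 : (1:ℝ) ≤ Real.log (b*t) := by
      rw [← Real.log_exp 1]
      exact Real.log_le_log (Real.exp_pos 1) hbt
    have h4 : (0:ℝ) ≤ Real.log t := Real.log_nonneg h2.le
    exact div_nonneg (Real.log_nonneg h3) h4
  · filter_upwards [eventually_ge_atTop (Real.exp (Real.log b)),
      eventually_ge_atTop (Real.exp 1), eventually_gt_atTop (0:ℝ),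
      eventually_ge_atTop (Real.exp 1 / b)] with t h1 h2 h3 h5
    have hlt : (1:ℝ) ≤ Real.log t := by
      rw [← Real.log_exp 1]; exact Real.log_le_log (Real.exp_pos 1) h2
    have hlb : Real.log b ≤ Real.log t := by
      rw [← Real.log_exp (Real.log b)]; exact Real.log_le_log (Real.exp_pos _) h1
    have hbt : Real.log (b * t) ≤ 2 * Real.log t := by
      rw [Real.log_mul (ne_of_gt hb) (ne_of_gt h3)]; linarith
    have hbtpos : (0:ℝ) < Real.log (b * t) := by
      have hbt' : Real.exp 1 ≤ b * t := by
        rw [div_le_iff₀ hb] at h5; linarith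
      have : (1:ℝ) ≤ Real.log (b*t) := by
        rw [← Real.log_exp 1]; exact Real.log_le_log (Real.exp_pos 1) hbt'
      linarith
    have : Real.log (Real.log (b*t)) ≤ Real.log (2 * Real.log t) :=
      Real.log_le_log hbtpos hbt
    rw [Real.log_mul two_ne_zero (by linarith)] at this
    gcongr

private lemma aux_U {a : ℝ} (ha : 0 < a) (c : ℝ) :
    Tendsto (fun t : ℝ => (Real.log (a*t) - c) / Real.log t) atTop (nhds 1) := by
  have h1 : Tendsto (fun t : ℝ => (Real.log a - c) * (Real.log t)⁻¹ + 1) atTop (nhds 1) := by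
    have := (Real.tendsto_log_atTop.inv_tendsto_atTop).const_mul (Real.log a - c)
    simpa using this.add_const 1
  refine h1.congr' ?_
  filter_upwards [eventually_gt_atTop (1:ℝ), eventually_gt_atTop (0:ℝ)] with t h2 h3
  have hlt : Real.log t ≠ 0 := ne_of_gt (Real.log_pos h2)
  rw [Real.log_mul (ne_of_gt ha) (ne_of_gt h3)]
  field_simp
  ring

private lemma aux_V {a lam : ℝ} (ha : 0 < a) (hlam : 0 < lam) :
    Tendsto (fun t : ℝ =>
      (Real.log (a*t) - Real.log (Real.log (a*t/lam)) - Real.log lam) / Real.log t)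
      atTop (nhds 1) := by
  have h1 := (aux_U ha (Real.log lam)).sub (aux_W (div_pos ha hlam))
  have h1' : Tendsto (fun t : ℝ =>
      (Real.log (a*t) - Real.log lam) / Real.log t
        - Real.log (Real.log (a/lam*t)) / Real.log t) atTop (nhds 1) := by simpa using h1
  refine h1'.congr (fun t => ?_)
  have h : a/lam*t = a*t/lam := by ring
  rw [h]; ring

theorem floor_solution_asymptotic {lam a : ℝ} (hlam : 0 < lam) (ha : 1 < a)
    (s : ℝ → ℝ)
    (hs : ∀ E ∈ Set.Ioo (0 : ℝ) 1,
      lam < s E ∧ (s E - lam) * Real.log (s E / lam) = a * Real.log (1 / E)) :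
    Tendsto
      (fun E : ℝ => (⌊s E⌋ : ℝ) * Real.log (Real.log (1 / E)) / (a * Real.log (1 / E)))
      (nhdsWithin 0 (Set.Ioi 0)) (nhds 1) := by
  have ha0 : (0:ℝ) < a := by linarith
  have hT := aux_T
  set l := nhdsWithin (0:ℝ) (Set.Ioi 0) with hl
  have hmem : ∀ᶠ E in l, E ∈ Set.Ioo (0:ℝ) 1 :=
    eventually_of_mem (Ioo_mem_nhdsGT_of_mem ⟨le_refl 0, one_pos⟩) (fun _ h => h)
  -- key eventual facts
  have key : ∀ᶠ E in l,
      lam < s E ∧ (s E - lam) * Real.log (s E / lam) = a * Real.log (1/E)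
      ∧ s E ≤ a * Real.log (1/E)
      ∧ a * Real.log (1/E) / Real.log (a * Real.log (1/E) / lam) ≤ s E - lam
      ∧ 1 < Real.log (1/E)
      ∧ 2 ≤ Real.log (a * Real.log (1/E) / lam)
      ∧ 0 < Real.log (s E / lam) := by
    filter_upwards [hmem, hT.eventually (eventually_gt_atTop (1:ℝ)),
      hT.eventually (eventually_ge_atTop (2*lam/a)),
      hT.eventually (eventually_ge_atTop (Real.exp 2 * lam / a))] with E hE hT1 hT2 hT3
    obtain ⟨hs1, hs2⟩ := hs E hE
    set t := Real.log (1/E) with htdef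
    have ht0 : (0:ℝ) < t := by linarith
    have hL0 : (0:ℝ) < a * t := by positivity
    have hL2 : 2 * lam ≤ a * t := by
      rw [div_le_iff₀ ha0] at hT2; linarith [hT2]
    have hlog2 : (2:ℝ) ≤ Real.log (a * t / lam) := by
      rw [div_le_iff₀ ha0] at hT3
      have harg : Real.exp 2 ≤ a * t / lam := by
        rw [le_div_iff₀ hlam]; linarith [hT3]
      calc (2:ℝ) = Real.log (Real.exp 2) := (Real.log_exp 2).symm
        _ ≤ Real.log (a * t / lam) := Real.log_le_log (Real.exp_pos 2) harg
    have hspos : 0 < s E := lt_trans hlam hs1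
    have hlogs : 0 < Real.log (s E / lam) := Real.log_pos ((one_lt_div hlam).mpr hs1)
    have hsle : s E ≤ a * t := by
      by_contra h
      push_neg at h
      have h2 : Real.log (a * t / lam) < Real.log (s E / lam) :=
        Real.log_lt_log (div_pos hL0 hlam) (by gcongr)
      have h3 : a * t ≤ (a * t - lam) * Real.log (a * t / lam) := by
        have := mul_le_mul (by linarith : a*t/2 ≤ a*t - lam) hlog2
          (by norm_num) (by linarith)
        linarith [this]
      have h4 : (a * t - lam) * Real.log (a * t / lam) < (s E - lam) * Real.log (s E / lam) :=
        mul_lt_mul'' (by linarith) h2 (by linarith) (by linarith)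
      linarith [hs2, h3, h4]
    have hdiv : s E - lam = a * t / Real.log (s E / lam) :=
      (eq_div_iff (ne_of_gt hlogs)).mpr hs2
    have hloglele : Real.log (s E / lam) ≤ Real.log (a * t / lam) :=
      Real.log_le_log (div_pos hspos hlam) (by gcongr)
    have hlow : a * t / Real.log (a * t / lam) ≤ s E - lam := by
      rw [hdiv]
      gcongr
    exact ⟨hs1, hs2, hsle, hlow, hT1, hlog2, hlogs⟩
  -- B : the floor-error term tends to 0
  have hB : Tendsto (fun E : ℝ =>
      ((⌊s E⌋ : ℝ) - (s E - lam)) * Real.log (Real.log (1/E)) / (a * Real.log (1/E)))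
      l (nhds 0) := by
    have hg : Tendsto (fun E : ℝ =>
        (1 + lam) * (Real.log (Real.log (1/E)) / (a * Real.log (1/E)))) l (nhds 0) := by
      have h0 : Tendsto (fun x : ℝ => Real.log x / (a * x)) atTop (nhds 0) := by
        simpa using Real.tendsto_pow_log_div_mul_add_atTop a 0 1 (ne_of_gt ha0)
      have := (h0.comp hT).const_mul (1 + lam)
      simpa [Function.comp_def] using this
    apply squeeze_zero_norm' ?_ hg
    filter_upwards [key] with E hE
    obtain ⟨hs1, hs2, hsle, hlow, hT1, hlog2, hlogs⟩ := hE
    have hfl1 : (⌊s E⌋ : ℝ) ≤ s E := Int.floor_le _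
    have hfl2 : s E - 1 < (⌊s E⌋ : ℝ) := Int.sub_one_lt_floor _
    have habs : |(⌊s E⌋ : ℝ) - (s E - lam)| ≤ 1 + lam := by
      rw [abs_le]; constructor <;> linarith
    have ht0 : (0:ℝ) < Real.log (1/E) := by linarith
    have hlt0 : (0:ℝ) ≤ Real.log (Real.log (1/E)) := Real.log_nonneg hT1.le
    rw [Real.norm_eq_abs, abs_div, abs_mul, abs_of_nonneg hlt0,
      abs_of_pos (by positivity : (0:ℝ) < a * Real.log (1/E)), mul_div_assoc]
    gcongr
  -- D : log(s/lam)/log(log(1/E)) → 1 by squeeze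
  have hD : Tendsto (fun E : ℝ =>
      Real.log (s E / lam) / Real.log (Real.log (1/E))) l (nhds 1) := by
    have hlo : Tendsto (fun E : ℝ =>
        (Real.log (a * Real.log (1/E)) - Real.log (Real.log (a * Real.log (1/E) / lam))
          - Real.log lam) / Real.log (Real.log (1/E))) l (nhds 1) := by
      simpa [Function.comp_def] using (aux_V ha0 hlam).comp hT
    have hhi : Tendsto (fun E : ℝ =>
        (Real.log (a * Real.log (1/E)) - Real.log lam) / Real.log (Real.log (1/E)))
        l (nhds 1) := by
      simpa [Function.comp_def] using (aux_U ha0 (Real.log lam)).comp hT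
    refine tendsto_of_tendsto_of_tendsto_of_le_of_le' hlo hhi ?_ ?_
    · filter_upwards [key] with E hE
      obtain ⟨hs1, hs2, hsle, hlow, hT1, hlog2, hlogs⟩ := hE
      set t := Real.log (1/E)
      have ht0 : (0:ℝ) < t := by linarith
      have hL0 : (0:ℝ) < a * t := by positivity
      have hlogt : (0:ℝ) < Real.log t := Real.log_pos hT1
      have hspos : 0 < s E := lt_trans hlam hs1
      have hqpos : (0:ℝ) < a * t / Real.log (a * t / lam) := by
        apply div_pos hL0; linarith
      have h1 : Real.log (a * t / Real.log (a * t / lam)) ≤ Real.log (s E) :=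
        Real.log_le_log hqpos (by linarith)
      rw [Real.log_div (ne_of_gt hL0) (by linarith : Real.log (a*t/lam) ≠ 0)] at h1
      rw [Real.log_div (ne_of_gt hspos) (ne_of_gt hlam)]
      gcongr
    · filter_upwards [key] with E hE
      obtain ⟨hs1, hs2, hsle, hlow, hT1, hlog2, hlogs⟩ := hE
      set t := Real.log (1/E)
      have hlogt : (0:ℝ) < Real.log t := Real.log_pos hT1
      have hspos : 0 < s E := lt_trans hlam hs1
      have h1 : Real.log (s E) ≤ Real.log (a * t) := Real.log_le_log hspos hsle
      rw [Real.log_div (ne_of_gt hspos) (ne_of_gt hlam)]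
      gcongr
  -- C : reciprocal
  have hC : Tendsto (fun E : ℝ =>
      Real.log (Real.log (1/E)) / Real.log (s E / lam)) l (nhds 1) := by
    have := (hD.inv₀ one_ne_zero).congr (fun E => inv_div _ _)
    simpa using this
  -- A : main term tends to 1
  have hA : Tendsto (fun E : ℝ =>
      (s E - lam) * Real.log (Real.log (1/E)) / (a * Real.log (1/E))) l (nhds 1) := by
    refine hC.congr' ?_
    filter_upwards [key] with E hE
    obtain ⟨hs1, hs2, hsle, hlow, hT1, hlog2, hlogs⟩ := hE
    set t := Real.log (1/E)
    have ht0 : (0:ℝ) < t := by linarith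
    have hdiv : s E - lam = a * t / Real.log (s E / lam) :=
      (eq_div_iff (ne_of_gt hlogs)).mpr hs2
    rw [hdiv]
    field_simp
  have hfinal := hA.add hB
  have := hfinal.congr (fun E => by ring :
    ∀ E : ℝ, (s E - lam) * Real.log (Real.log (1/E)) / (a * Real.log (1/E))
      + ((⌊s E⌋ : ℝ) - (s E - lam)) * Real.log (Real.log (1/E)) / (a * Real.log (1/E))
      = (⌊s E⌋ : ℝ) * Real.log (Real.log (1/E)) / (a * Real.log (1/E)))
  simpa using this
end

section
/- Fix λ > 0 and a > 1. For E ∈ (0,1), let s(E) be the unique real number s > λ satisfying (s − λ)·log(s/λ) = a·log(1/E), and set η(E) := ⌊s(E)⌋. Then liminf_{E → 0⁺} [ η(E)^{η(E)} · E^{a} ] / [ η(E)^{λ−1} · λ^{η(E)−λ} ] ≥ min{λ, 1} / e. -/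
open Filter

lemma gmono_lt {lam : ℝ} (hlam : 0 < lam) {x y : ℝ} (hx : lam < x) (hxy : x < y) :
    (x - lam) * Real.log (x / lam) < (y - lam) * Real.log (y / lam) := by
  have hx0 : 0 < x := hlam.trans hx
  have hlx : 0 ≤ Real.log (x / lam) := Real.log_nonneg (by rw [le_div_iff₀ hlam]; linarith)
  have hll : Real.log (x / lam) < Real.log (y / lam) :=
    Real.log_lt_log (by positivity) (by rw [div_lt_div_iff₀ hlam hlam]; nlinarith)
  calc (x - lam) * Real.log (x / lam) ≤ (x - lam) * Real.log (y / lam) :=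
        mul_le_mul_of_nonneg_left hll.le (by linarith)
    _ < (y - lam) * Real.log (y / lam) :=
        mul_lt_mul_of_pos_right (by linarith) (lt_of_le_of_lt hlx hll)

lemma gmono_le {lam : ℝ} (hlam : 0 < lam) {x y : ℝ} (hx : lam < x) (hxy : x ≤ y) :
    (x - lam) * Real.log (x / lam) ≤ (y - lam) * Real.log (y / lam) := by
  rcases eq_or_lt_of_le hxy with h | h
  · rw [h]
  · exact (gmono_lt hlam hx h).le

lemma f_eq_exp {lam : ℝ} (hlam : 0 < lam) {E n : ℝ} (hE : 0 < E) (hn : 0 < n) (a : ℝ) :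
    (n ^ n * E ^ a) / (n ^ (lam - 1) * lam ^ (n - lam)) =
      Real.exp (Real.log n * n + Real.log E * a -
        (Real.log n * (lam - 1) + Real.log lam * (n - lam))) := by
  rw [Real.rpow_def_of_pos hn, Real.rpow_def_of_pos hE, Real.rpow_def_of_pos hn,
    Real.rpow_def_of_pos hlam, ← Real.exp_add, ← Real.exp_add, ← Real.exp_sub]

lemma core_lower {lam a : ℝ} (hlam : 0 < lam) {N E s : ℝ} (hN : 1 ≤ N) (hE0 : 0 < E)
    (hsl : lam < s) (heq : (s - lam) * Real.log (s / lam) = a * Real.log (1 / E))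
    (hfl : N ≤ (⌊s⌋ : ℝ)) :
    min lam 1 * Real.exp (-1 - 1 / N) ≤
      ((⌊s⌋ : ℝ) ^ ((⌊s⌋ : ℝ)) * E ^ a) /
        ((⌊s⌋ : ℝ) ^ (lam - 1) * lam ^ ((⌊s⌋ : ℝ) - lam)) := by
  set n : ℝ := (⌊s⌋ : ℝ) with hn_def
  have hn1 : n ≤ s := Int.floor_le s
  have hn2 : s < n + 1 := Int.lt_floor_add_one s
  have hnN : 1 ≤ n := hN.trans hfl
  have hn0 : 0 < n := by linarith
  have hs0 : 0 < s := hlam.trans hsl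
  have hN0 : 0 < N := by linarith
  have hmin0 : 0 < min lam 1 := lt_min hlam one_pos
  rw [f_eq_exp hlam hE0 hn0 a, ← Real.exp_log hmin0, ← Real.exp_add, Real.exp_le_exp]
  -- abbreviations
  set ln := Real.log n
  set ls := Real.log s
  set ll := Real.log lam
  have hle : Real.log E * a = -((s - lam) * (ls - ll)) := by
    have h1 : Real.log (1 / E) = -Real.log E := by rw [one_div, Real.log_inv]
    have h2 : Real.log (s / lam) = ls - ll := Real.log_div hs0.ne' hlam.ne'
    rw [h1, h2] at heq
    nlinarith [heq]
  have hln : 0 ≤ ln := Real.log_nonneg hnN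
  have hlsn : ls - ln ≤ (s - n) / n := by
    have h1 : Real.log (s / n) ≤ s / n - 1 := Real.log_le_sub_one_of_pos (by positivity)
    rw [Real.log_div hs0.ne' hn0.ne'] at h1
    have h2 : s / n - 1 = (s - n) / n := by field_simp
    linarith
  have h0 : 0 ≤ ls - ln := by
    have := Real.log_le_log hn0 hn1
    linarith
  have hsub : (s - lam) * (ls - ln) ≤ (s - n) + 1 / N := by
    calc (s - lam) * (ls - ln) ≤ (n + 1) * (ls - ln) :=
          mul_le_mul_of_nonneg_right (by linarith) h0
      _ ≤ (n + 1) * ((s - n) / n) := mul_le_mul_of_nonneg_left hlsn (by linarith)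
      _ = (s - n) + (s - n) / n := by field_simp
      _ ≤ (s - n) + 1 / N := by
          have h3 : (s - n) / n ≤ 1 / N := by
            rw [div_le_div_iff₀ hn0 hN0]
            nlinarith
          linarith
  have hmin : Real.log (min lam 1) ≤ (s - n) * ll := by
    rcases le_total lam 1 with h | h
    · rw [min_eq_left h]
      have hll0 : ll ≤ 0 := Real.log_nonpos hlam.le h
      nlinarith
    · rw [min_eq_right h, Real.log_one]
      exact mul_nonneg (by linarith) (Real.log_nonneg h)
  have hfree : 0 ≤ (1 - (s - n)) * ln := mul_nonneg (by linarith) hln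
  nlinarith [hle, hsub, hmin, hfree, hn2, hn1]

lemma core_upper {lam a : ℝ} (hlam : 0 < lam) {E s c : ℝ} (hE0 : 0 < E) (hc : 2 ≤ c)
    (hsl : lam < s)
    (heq : (s - lam) * Real.log (s / lam) = a * Real.log (1 / E))
    (hfl : (⌊s⌋ : ℝ) = c - 1) (hsc : s = c - 1 / c) :
    ((⌊s⌋ : ℝ) ^ ((⌊s⌋ : ℝ)) * E ^ a) /
        ((⌊s⌋ : ℝ) ^ (lam - 1) * lam ^ ((⌊s⌋ : ℝ) - lam)) ≤
      Real.exp (1 + |Real.log lam|) := by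
  have hc0 : 0 < c := by linarith
  have hic : 1 / c ≤ 1 := by rw [div_le_one hc0]; linarith
  have hic0 : 0 < 1 / c := by positivity
  set n : ℝ := (⌊s⌋ : ℝ) with hn_def
  have hn0 : 0 < n := by rw [hfl]; linarith
  have hs0 : 0 < s := hlam.trans hsl
  rw [f_eq_exp hlam hE0 hn0 a, Real.exp_le_exp]
  set ln := Real.log n
  set ls := Real.log s
  set ll := Real.log lam
  have hle : Real.log E * a = -((s - lam) * (ls - ll)) := by
    have h1 : Real.log (1 / E) = -Real.log E := by rw [one_div, Real.log_inv]
    have h2 : Real.log (s / lam) = ls - ll := Real.log_div hs0.ne' hlam.ne'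
    rw [h1, h2] at heq
    nlinarith [heq]
  have hns : n ≤ s := Int.floor_le s
  have hlnls : ln ≤ ls := Real.log_le_log hn0 hns
  have h1 : 0 ≤ (s - lam) * (ls - ln) := mul_nonneg (by linarith) (by linarith)
  have h2 : ln ≤ c - 2 := by
    have h := Real.log_le_sub_one_of_pos (show (0:ℝ) < c - 1 by linarith)
    show Real.log n ≤ c - 2
    rw [hfl]
    linarith
  have h3 : (1 / c) * ln ≤ 1 := by
    rcases le_or_gt 0 ln with h | h
    · calc (1 / c) * ln ≤ (1 / c) * c := by
            apply mul_le_mul_of_nonneg_left _ hic0.le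
            linarith
        _ = 1 := by field_simp
    · nlinarith
  have h4 : (1 - 1 / c) * ll ≤ |ll| := by
    calc (1 - 1 / c) * ll ≤ (1 - 1 / c) * |ll| :=
          mul_le_mul_of_nonneg_left (le_abs_self ll) (by linarith)
      _ ≤ 1 * |ll| := mul_le_mul_of_nonneg_right (by linarith) (abs_nonneg ll)
      _ = |ll| := one_mul _
  -- goal: ln * n + log E * a - (ln * (lam-1) + ll * (n-lam)) ≤ 1 + |ll|
  rw [hle]
  have h5 : n + 1 - s = 1 / c := by rw [hfl, hsc]; ring
  have h5' : s - n = 1 - 1 / c := by rw [hfl, hsc]; ring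
  have h6 : (n + 1 - s) * ln = (1 / c) * ln := by rw [h5]
  have h7 : (s - n) * ll = (1 - 1 / c) * ll := by rw [h5']
  nlinarith [h1, h3, h4, h6, h7]


set_option maxHeartbeats 1000000 in
theorem floor_solution_power_liminf {lam a : ℝ} (hlam : 0 < lam) (ha : 1 < a)
    (s : ℝ → ℝ)
    (hs : ∀ E ∈ Set.Ioo (0 : ℝ) 1,
      lam < s E ∧ (s E - lam) * Real.log (s E / lam) = a * Real.log (1 / E)) :
    min lam 1 / Real.exp 1 ≤
      Filter.liminf
        (fun E : ℝ =>
          ((⌊s E⌋ : ℝ) ^ ((⌊s E⌋ : ℝ)) * E ^ a) /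
            ((⌊s E⌋ : ℝ) ^ (lam - 1) * lam ^ ((⌊s E⌋ : ℝ) - lam)))
        (nhdsWithin 0 (Set.Ioi 0)) := by
  have ha0 : 0 < a := by linarith
  set f : ℝ → ℝ := fun E =>
    ((⌊s E⌋ : ℝ) ^ ((⌊s E⌋ : ℝ)) * E ^ a) /
      ((⌊s E⌋ : ℝ) ^ (lam - 1) * lam ^ ((⌊s E⌋ : ℝ) - lam)) with hf_def
  -- Coboundedness via a frequent upper bound
  have hfreq : ∃ᶠ E in nhdsWithin (0:ℝ) (Set.Ioi 0), f E ≤ Real.exp (1 + |Real.log lam|) := by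
    rw [Filter.frequently_iff]
    intro U hU
    obtain ⟨u, hu, hsubU⟩ := mem_nhdsGT_iff_exists_Ioo_subset.mp hU
    have hu0 : (0:ℝ) < u := hu
    obtain ⟨k, hk⟩ := exists_nat_gt
      (max (max (lam + 2) 2) (max (lam * Real.exp 1 + 1) (lam + 1 + a * |Real.log u| + 1)))
    set c : ℝ := (k : ℝ) with hc_def
    have hc2 : 2 ≤ c := le_of_lt (lt_of_le_of_lt (by simp [le_max_iff]) hk)
    have hclam2 : lam + 2 < c := lt_of_le_of_lt (by simp [le_max_iff]) hk
    have hce : lam * Real.exp 1 + 1 < c := lt_of_le_of_lt (by simp [le_max_iff]) hk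
    have hcu : lam + 1 + a * |Real.log u| + 1 < c := lt_of_le_of_lt (by simp [le_max_iff]) hk
    have hc0 : 0 < c := by linarith
    have hic : 1 / c ≤ 1 := by rw [div_le_one hc0]; linarith
    have hic0 : 0 < 1 / c := by positivity
    set t : ℝ := c - 1 / c with ht_def
    have htlam : lam < t := by simp only [ht_def]; linarith
    have ht0 : 0 < t := hlam.trans htlam
    have hlog1 : 1 ≤ Real.log (t / lam) := by
      rw [Real.le_log_iff_exp_le (by positivity), le_div_iff₀ hlam]
      have he1 : Real.exp 1 * lam = lam * Real.exp 1 := by ring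
      simp only [ht_def]
      linarith [he1]
    have hgt_lin : t - lam ≤ (t - lam) * Real.log (t / lam) := by
      nlinarith [hlog1, htlam]
    set G : ℝ := (t - lam) * Real.log (t / lam) with hG_def
    have hG0 : 0 < G := by nlinarith [htlam]
    set E : ℝ := Real.exp (-(G / a)) with hE_def
    have hE0 : 0 < E := Real.exp_pos _
    have hE1 : E < 1 := by
      rw [hE_def, Real.exp_lt_one_iff]
      have : 0 < G / a := by positivity
      linarith
    have hEu : E < u := by
      rw [hE_def, ← Real.exp_log hu0, Real.exp_lt_exp]
      have h1 : -(a * Real.log u) ≤ a * |Real.log u| := by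
        have := neg_abs_le (Real.log u)
        nlinarith [abs_nonneg (Real.log u)]
      have h2 : a * |Real.log u| < G := by
        have h3 : c - 1 - lam ≤ t - lam := by simp only [ht_def]; linarith
        nlinarith [hgt_lin]
      have hgoal : -G < Real.log u * a := by nlinarith [h1, h2]
      have h4 := (div_lt_iff₀ ha0).mpr hgoal
      rw [neg_div] at h4
      exact h4
    obtain ⟨hsE1, hsE2⟩ := hs E ⟨hE0, hE1⟩
    -- a * log (1/E) = G
    have hlogE : a * Real.log (1 / E) = G := by
      rw [one_div, hE_def, Real.log_inv, Real.log_exp]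
      field_simp
    have hseqG : (s E - lam) * Real.log (s E / lam) = G := by rw [hsE2, hlogE]
    -- uniqueness: s E = t
    have hseq : s E = t := by
      rcases lt_trichotomy (s E) t with h | h | h
      · exfalso
        have := gmono_lt hlam hsE1 h
        rw [hseqG] at this
        exact absurd this (lt_irrefl G)
      · exact h
      · exfalso
        have := gmono_lt hlam htlam h
        rw [hseqG] at this
        exact absurd this (lt_irrefl G)
    have hfloor : (⌊s E⌋ : ℝ) = c - 1 := by
      have hfe : ⌊s E⌋ = (k : ℤ) - 1 := by
        rw [hseq, Int.floor_eq_iff]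
        constructor
        · push_cast
          simp only [ht_def]
          linarith [hc_def]
        · push_cast
          simp only [ht_def]
          linarith [hc_def]
      rw [hfe]
      push_cast
      simp only [hc_def]
    refine ⟨E, hsubU ⟨hE0, hEu⟩, ?_⟩
    exact core_upper hlam hE0 hc2 hsE1 hsE2 hfloor (by rw [hseq])
  have hco : IsCoboundedUnder (· ≥ ·) (nhdsWithin (0:ℝ) (Set.Ioi 0)) f :=
    Filter.IsCoboundedUnder.of_frequently_le hfreq
  -- Tendsto of a * log(1/E) to atTop
  have htop : Tendsto (fun E : ℝ => a * Real.log (1 / E)) (nhdsWithin 0 (Set.Ioi 0)) atTop := by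
    have h1 : Tendsto Real.log (nhdsWithin (0:ℝ) (Set.Ioi 0)) atBot :=
      Real.tendsto_log_nhdsGT_zero
    have h2 : Tendsto (fun E : ℝ => -Real.log E) (nhdsWithin (0:ℝ) (Set.Ioi 0)) atTop :=
      tendsto_neg_atBot_atTop.comp h1
    have h3 := h2.const_mul_atTop ha0
    refine h3.congr fun E => ?_
    rw [one_div, Real.log_inv]
  -- Main bound
  rw [div_eq_mul_inv, ← Real.exp_neg]
  refine le_of_forall_sub_le fun ε hε => ?_
  have hkey : min lam 1 * Real.exp (-1) - ε ≤ liminf f (nhdsWithin (0:ℝ) (Set.Ioi 0)) := by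
    set N : ℝ := max (1 / ε) 1 with hN_def
    have hN1 : 1 ≤ N := le_max_right _ _
    have hN0 : 0 < N := by linarith
    have hNε : 1 / N ≤ ε := by
      rw [div_le_iff₀ hN0]
      have h1 : 1 / ε ≤ N := le_max_left _ _
      rw [div_le_iff₀ hε] at h1
      linarith
    refine le_liminf_of_le hco ?_
    -- eventually s E is large
    set M : ℝ := max (N + 1) (lam + 1) with hM_def
    have hMlam : lam < M := lt_of_lt_of_le (by linarith) (le_max_right _ _)
    have hev1 : ∀ᶠ E in nhdsWithin (0:ℝ) (Set.Ioi 0),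
        (M - lam) * Real.log (M / lam) < a * Real.log (1 / E) :=
      htop.eventually (eventually_gt_atTop _)
    have hmem : Set.Ioo (0:ℝ) 1 ∈ nhdsWithin (0:ℝ) (Set.Ioi 0) :=
      Ioo_mem_nhdsGT_of_mem (by constructor <;> norm_num)
    have hev2 : ∀ᶠ E in nhdsWithin (0:ℝ) (Set.Ioi 0), E ∈ Set.Ioo (0:ℝ) 1 :=
      Filter.eventually_of_mem hmem fun x hx => hx
    filter_upwards [hev1, hev2] with E hE1 hE2
    obtain ⟨hsE1, hsE2⟩ := hs E hE2
    have hsM : M < s E := by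
      by_contra h
      push_neg at h
      have := gmono_le hlam hsE1 h
      rw [hsE2] at this
      linarith
    have hfl : N ≤ (⌊s E⌋ : ℝ) := by
      have h1 : s E - 1 < (⌊s E⌋ : ℝ) := Int.sub_one_lt_floor _
      have h2 : N + 1 ≤ M := le_max_left _ _
      linarith
    have hcore := core_lower hlam hN1 hE2.1 hsE1 hsE2 hfl
    have hstep : min lam 1 * Real.exp (-1) - ε ≤ min lam 1 * Real.exp (-1 - 1 / N) := by
      have hmin0 : 0 < min lam 1 := lt_min hlam one_pos
      have hmin1 : min lam 1 ≤ 1 := min_le_right _ _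
      have hexp : Real.exp (-1 - 1 / N) = Real.exp (-1) * Real.exp (-(1 / N)) := by
        rw [← Real.exp_add]; ring_nf
      have hexpN : 1 - 1 / N ≤ Real.exp (-(1 / N)) := by
        have := Real.add_one_le_exp (-(1 / N))
        linarith
      have he1 : Real.exp (-1) ≤ 1 := by
        rw [Real.exp_le_one_iff]; norm_num
      have he1' : 0 < Real.exp (-1) := Real.exp_pos _
      have hN' : 0 < 1 / N := by positivity
      rw [hexp]
      have hme : min lam 1 * Real.exp (-1) ≤ 1 := mul_le_one₀ hmin1 he1'.le he1
      have h8 : min lam 1 * Real.exp (-1) * (1 - Real.exp (-(1 / N))) ≤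
          min lam 1 * Real.exp (-1) * (1 / N) :=
        mul_le_mul_of_nonneg_left (by linarith) (by positivity)
      have h9 : min lam 1 * Real.exp (-1) * (1 / N) ≤ 1 * (1 / N) :=
        mul_le_mul_of_nonneg_right hme hN'.le
      nlinarith [h8, h9, hNε]
    linarith
  exact hkey
end

section
/- Fix λ > 0 and a > 1. For E ∈ (0,1), let s(E) be the unique real number s > λ satisfying (s − λ)·log(s/λ) = a·log(1/E), and set η(E) := ⌊s(E)⌋. Then limsup_{E → 0⁺} e^{η(E) − λ} · E^{a / log(η(E)/λ)} ≤ 1. -/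
open Filter

theorem floor_solution_exp_limsup {lam a : ℝ} (hlam : 0 < lam) (ha : 1 < a)
    (s : ℝ → ℝ)
    (hs : ∀ E ∈ Set.Ioo (0 : ℝ) 1,
      lam < s E ∧ (s E - lam) * Real.log (s E / lam) = a * Real.log (1 / E)) :
    Filter.limsup
      (fun E : ℝ =>
        Real.exp ((⌊s E⌋ : ℝ) - lam) * E ^ (a / Real.log ((⌊s E⌋ : ℝ) / lam)))
      (nhdsWithin 0 (Set.Ioi 0)) ≤ 1 := by
  set C := Real.log ((lam + 1) / lam) with hC
  have ha0 : (0:ℝ) < a := by linarith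
  set δ := min (1:ℝ) (Real.exp (-(C / a))) with hδ
  have hδ0 : 0 < δ := lt_min one_pos (Real.exp_pos _)
  have hmem : Set.Ioo (0:ℝ) δ ∈ nhdsWithin (0:ℝ) (Set.Ioi 0) :=
    Ioo_mem_nhdsGT_of_mem ⟨le_refl _, hδ0⟩
  have key : ∀ E ∈ Set.Ioo (0:ℝ) δ,
      Real.exp ((⌊s E⌋ : ℝ) - lam) * E ^ (a / Real.log ((⌊s E⌋ : ℝ) / lam)) ≤ 1 := by
    intro E hE
    obtain ⟨hE0, hEδ⟩ := hE
    have hE1 : E < 1 := lt_of_lt_of_le hEδ (min_le_left _ _)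
    obtain ⟨hlt, heq⟩ := hs E ⟨hE0, hE1⟩
    have hlogE : Real.log E < -(C / a) := by
      calc Real.log E < Real.log (Real.exp (-(C / a))) :=
            Real.log_lt_log hE0 (lt_of_lt_of_le hEδ (min_le_right _ _))
        _ = -(C / a) := Real.log_exp _
    have hCpos : 0 < C := Real.log_pos (by rw [lt_div_iff₀ hlam]; linarith)
    have hrhs : C < a * Real.log (1 / E) := by
      rw [Real.log_div one_ne_zero (ne_of_gt hE0), Real.log_one]
      have : C / a < -Real.log E := by linarith
      calc C = a * (C / a) := by field_simp
        _ < a * (0 - Real.log E) := by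
            apply mul_lt_mul_of_pos_left _ ha0; linarith
        _ = a * (0 - Real.log E) := rfl
    -- s E ≥ lam + 1
    have hs1 : lam + 1 ≤ s E := by
      by_contra h
      push_neg at h
      have h1 : s E - lam < 1 := by linarith
      have h2 : Real.log (s E / lam) < C := by
        apply Real.log_lt_log (div_pos (by linarith) hlam)
        rw [div_lt_div_iff₀ hlam hlam]; nlinarith
      have h3 : 0 < s E - lam := by linarith
      have h4 : 0 < Real.log (s E / lam) :=
        Real.log_pos (by rw [lt_div_iff₀ hlam]; linarith)
      have : (s E - lam) * Real.log (s E / lam) < 1 * C :=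
        mul_lt_mul'' h1 h2 (le_of_lt h3) (le_of_lt h4)
      rw [heq] at this; linarith
    set n : ℝ := (⌊s E⌋ : ℝ) with hn
    have hns : n ≤ s E := Int.floor_le _
    have hln : lam < n := by
      have := Int.sub_one_lt_floor (s E)
      have : s E - 1 < n := this
      linarith
    have hnlog : 0 < Real.log (n / lam) :=
      Real.log_pos (by rw [lt_div_iff₀ hlam]; linarith)
    have hslog : Real.log (n / lam) ≤ Real.log (s E / lam) := by
      apply Real.log_le_log (div_pos (by linarith) hlam)
      gcongr
    have hsl : 0 < s E - lam := by linarith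
    -- rewrite the expression
    have hrpow : E ^ (a / Real.log (n / lam)) =
        Real.exp ((a / Real.log (n / lam)) * Real.log E) := by
      rw [Real.rpow_def_of_pos hE0, mul_comm]
    rw [hrpow, ← Real.exp_add]
    have hlogE' : a * Real.log E = -((s E - lam) * Real.log (s E / lam)) := by
      rw [heq, Real.log_div one_ne_zero (ne_of_gt hE0), Real.log_one]; ring
    have hexp : n - lam + a / Real.log (n / lam) * Real.log E ≤ 0 := by
      have h5 : a / Real.log (n / lam) * Real.log E
          = -((s E - lam) * Real.log (s E / lam)) / Real.log (n / lam) := by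
        rw [div_mul_eq_mul_div, hlogE']
      rw [h5]
      have h6 : s E - lam ≤ (s E - lam) * Real.log (s E / lam) / Real.log (n / lam) := by
        rw [le_div_iff₀ hnlog]
        have := mul_le_mul_of_nonneg_left hslog (le_of_lt hsl)
        linarith
      have : -((s E - lam) * Real.log (s E / lam)) / Real.log (n / lam)
          = -((s E - lam) * Real.log (s E / lam) / Real.log (n / lam)) := by ring
      rw [this]
      linarith
    calc Real.exp (n - lam + a / Real.log (n / lam) * Real.log E) ≤ Real.exp 0 :=
          Real.exp_le_exp.mpr hexp
      _ = 1 := Real.exp_zero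
  have hev : ∀ᶠ E in nhdsWithin (0:ℝ) (Set.Ioi 0),
      Real.exp ((⌊s E⌋ : ℝ) - lam) * E ^ (a / Real.log ((⌊s E⌋ : ℝ) / lam)) ≤ 1 :=
    eventually_of_mem hmem key
  have hcobdd : IsCoboundedUnder (· ≤ ·) (nhdsWithin (0:ℝ) (Set.Ioi 0))
      (fun E : ℝ => Real.exp ((⌊s E⌋ : ℝ) - lam) * E ^ (a / Real.log ((⌊s E⌋ : ℝ) / lam))) := by
    apply isCoboundedUnder_le_of_eventually_le (nhdsWithin (0:ℝ) (Set.Ioi 0)) (x := 0)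
    filter_upwards [self_mem_nhdsWithin] with E hE
    have hE0 : (0:ℝ) < E := hE
    positivity
  exact limsup_le_of_le hcobdd hev
end

section
/- Let X be a nonnegative real random variable with finite mean satisfying E[X] ≤ E for some E > 0, and let t > 0. Then E[X² · Q(X − t) + t² · Q(t − X)] ≤ E·t + t·φ(t) + (2 + 1/√(2π))·E. -/
open MeasureTheory Set Real

/-- The standard normal density. -/
noncomputable def stdNormalPDF (x : ℝ) : ℝ :=
  (1 / Real.sqrt (2 * Real.pi)) * Real.exp (-x ^ 2 / 2)

/-- The standard normal tail function `Q(x) = ∫_x^∞ φ(u) du`. -/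
noncomputable def stdNormalQ (x : ℝ) : ℝ :=
  ∫ u in Set.Ioi x, stdNormalPDF u

lemma sqrt2pi_pos : 0 < Real.sqrt (2 * Real.pi) :=
  Real.sqrt_pos.mpr (by positivity)

lemma pdf_nonneg (x : ℝ) : 0 ≤ stdNormalPDF x := by
  unfold stdNormalPDF; positivity

lemma pdf_le (x : ℝ) : stdNormalPDF x ≤ 1 / Real.sqrt (2 * Real.pi) := by
  unfold stdNormalPDF
  have h1 : Real.exp (-x ^ 2 / 2) ≤ 1 := by
    rw [Real.exp_le_one_iff]; nlinarith [sq_nonneg x]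
  calc 1 / Real.sqrt (2 * Real.pi) * Real.exp (-x ^ 2 / 2)
      ≤ 1 / Real.sqrt (2 * Real.pi) * 1 := by
        apply mul_le_mul_of_nonneg_left h1 (by positivity)
    _ = 1 / Real.sqrt (2 * Real.pi) := mul_one _

lemma pdf_eq (x : ℝ) : stdNormalPDF x = (1 / Real.sqrt (2 * Real.pi)) * Real.exp (-(1/2) * x ^ 2) := by
  unfold stdNormalPDF; ring_nf

lemma pdf_integrable : Integrable stdNormalPDF := by
  have := (integrable_exp_neg_mul_sq (by norm_num : (0:ℝ) < 1/2)).const_mul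
    (1 / Real.sqrt (2 * Real.pi))
  refine this.congr ?_
  filter_upwards with x
  rw [pdf_eq]

lemma pdf_total : ∫ x, stdNormalPDF x = 1 := by
  simp_rw [pdf_eq]
  rw [integral_const_mul, integral_gaussian]
  rw [one_div, inv_mul_eq_one₀ (ne_of_gt sqrt2pi_pos)]
  rw [show Real.pi / (1/2) = 2 * Real.pi by ring]

lemma Q_nonneg (x : ℝ) : 0 ≤ stdNormalQ x :=
  setIntegral_nonneg measurableSet_Ioi (fun u _ => pdf_nonneg u)

lemma Q_add_Q_neg (x : ℝ) : stdNormalQ x + stdNormalQ (-x) = 1 := by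
  have heven : ∀ u : ℝ, stdNormalPDF (-u) = stdNormalPDF u := by
    intro u; unfold stdNormalPDF; ring_nf
  have h1 : stdNormalQ (-x) = ∫ u in Iic x, stdNormalPDF u := by
    unfold stdNormalQ
    rw [show (∫ u in Ioi (-x), stdNormalPDF u) = ∫ u in Ioi (-x), stdNormalPDF (-u) by
      simp_rw [heven]]
    rw [integral_comp_neg_Ioi, neg_neg]
  conv_lhs => rw [h1]
  unfold stdNormalQ
  rw [add_comm, intervalIntegral.integral_Iic_add_Ioi pdf_integrable.integrableOn
    pdf_integrable.integrableOn, pdf_total]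

lemma Q_le_one (x : ℝ) : stdNormalQ x ≤ 1 := by
  have := Q_add_Q_neg x
  have := Q_nonneg (-x)
  linarith

lemma pdf_hasDeriv (u : ℝ) :
    HasDerivAt (fun v => -stdNormalPDF v) (u * stdNormalPDF u) u := by
  have h1 : HasDerivAt (fun v : ℝ => -v ^ 2 / 2) (-u) u := by
    have := (hasDerivAt_pow 2 u).neg
    have h := this.div_const 2
    exact h.congr_deriv (by norm_num; ring)
  have h2 := (h1.exp.const_mul (1 / Real.sqrt (2 * Real.pi))).neg
  simp only [stdNormalPDF]
  exact h2.congr_deriv (by ring)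

lemma xpdf_integrableOn (s : ℝ) : IntegrableOn (fun u => u * stdNormalPDF u) (Set.Ioi s) := by
  have : Integrable (fun u : ℝ => u * stdNormalPDF u) := by
    have := (integrable_mul_exp_neg_mul_sq (by norm_num : (0:ℝ) < 1/2)).const_mul
      (1 / Real.sqrt (2 * Real.pi))
    refine this.congr ?_
    filter_upwards with x
    rw [pdf_eq]; ring
  exact this.integrableOn

lemma xpdf_integral (s : ℝ) : ∫ u in Set.Ioi s, u * stdNormalPDF u = stdNormalPDF s := by
  have htend : Filter.Tendsto (fun v => -stdNormalPDF v) Filter.atTop (nhds 0) := by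
    rw [show (0:ℝ) = -((1 / Real.sqrt (2 * Real.pi)) * 0) by ring]
    apply Filter.Tendsto.neg
    apply Filter.Tendsto.const_mul
    apply Real.tendsto_exp_atBot.comp
    have : Filter.Tendsto (fun v : ℝ => v ^ 2 / 2) Filter.atTop Filter.atTop :=
      (Filter.tendsto_pow_atTop (by norm_num)).atTop_div_const (by norm_num)
    have h := Filter.tendsto_neg_atTop_atBot.comp this
    refine Filter.Tendsto.congr ?_ h
    intro v; simp [neg_div]
  have := integral_Ioi_of_hasDerivAt_of_tendsto
    (pdf_hasDeriv s).continuousAt.continuousWithinAt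
    (fun x _ => pdf_hasDeriv x) (xpdf_integrableOn s) htend
  rw [this]; ring

lemma mills (s : ℝ) (_hs : 0 ≤ s) : s * stdNormalQ s ≤ stdNormalPDF s := by
  unfold stdNormalQ
  rw [← integral_const_mul]
  rw [← xpdf_integral s]
  apply setIntegral_mono_on ((pdf_integrable.integrableOn).const_mul s) (xpdf_integrableOn s)
    measurableSet_Ioi
  intro u hu
  have : s ≤ u := le_of_lt hu
  exact mul_le_mul_of_nonneg_right this (pdf_nonneg u)

lemma one_le_sqrt2pi : (1:ℝ) ≤ Real.sqrt (2 * Real.pi) := by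
  rw [show (1:ℝ) = Real.sqrt 1 by simp]
  exact Real.sqrt_le_sqrt (by nlinarith [Real.pi_gt_three])

lemma two_le_sqrt2pi : (2:ℝ) ≤ Real.sqrt (2 * Real.pi) := by
  nlinarith [Real.sq_sqrt (show (0:ℝ) ≤ 2 * Real.pi by positivity),
    Real.sqrt_nonneg (2 * Real.pi), Real.pi_gt_three]

/-- `t² φ(t/2) ≤ 2`. -/
lemma tsq_pdf_half_le (t : ℝ) : t ^ 2 * stdNormalPDF (t / 2) ≤ 2 := by
  simp only [stdNormalPDF]
  set y : ℝ := (t/2)^2 / 2 with hy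
  have hyt : t ^ 2 = 8 * y := by rw [hy]; ring
  have hy0 : 0 ≤ y := by positivity
  have h1 : y ≤ Real.exp (y - 1) := by
    have := Real.add_one_le_exp (y - 1); linarith
  have h2 : y * Real.exp (-y) ≤ Real.exp (-1) := by
    have hexp : Real.exp (y - 1) * Real.exp (-y) = Real.exp (-1) := by
      rw [← Real.exp_add]; ring_nf
    calc y * Real.exp (-y) ≤ Real.exp (y-1) * Real.exp (-y) :=
          mul_le_mul_of_nonneg_right h1 (Real.exp_pos _).le
      _ = Real.exp (-1) := hexp
  have he : (2.7182818283 : ℝ) < Real.exp 1 := Real.exp_one_gt_d9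
  have hinv : Real.exp (-1) ≤ 1 / 2.7182818283 := by
    rw [Real.exp_neg]
    rw [inv_le_comm₀ (Real.exp_pos 1) (by norm_num)]
    rw [one_div, inv_inv]
    exact he.le
  have hexpr : -t^2/8 = -y := by rw [hy]; ring
  calc t ^ 2 * (1 / Real.sqrt (2 * Real.pi) * Real.exp (-(t/2) ^ 2 / 2))
      = (1 / Real.sqrt (2 * Real.pi)) * (8 * (y * Real.exp (-y))) := by
        rw [hyt]; ring_nf; rw [hy]; ring_nf
    _ ≤ (1 / Real.sqrt (2 * Real.pi)) * (8 * Real.exp (-1)) := by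
        have : (0:ℝ) ≤ 1 / Real.sqrt (2 * Real.pi) := by positivity
        nlinarith
    _ ≤ (1 / 2) * (8 * (1 / 2.7182818283)) := by
        have h3 : 1 / Real.sqrt (2 * Real.pi) ≤ 1/2 := by
          rw [div_le_div_iff₀ sqrt2pi_pos (by norm_num)]
          linarith [two_le_sqrt2pi]
        have h4 : (0:ℝ) < Real.exp (-1) := Real.exp_pos _
        nlinarith
    _ ≤ 2 := by norm_num

/-- key: for `0 ≤ x ≤ t/2`, `t φ(t−x) ≤ t φ(t) + 2x`. -/
lemma key_small (t x : ℝ) (ht : 0 < t) (hx : 0 ≤ x) (hxt : 2 * x ≤ t) :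
    t * stdNormalPDF (t - x) ≤ t * stdNormalPDF t + 2 * x := by
  set u : ℝ := t - x with hu
  have hu2 : t / 2 ≤ u := by rw [hu]; linarith
  have hu0 : 0 ≤ u := by linarith
  have hut : u ≤ t := by rw [hu]; linarith
  -- φ(t) = φ(u) * exp(-(x*(t+u))/2)
  have e1 : stdNormalPDF t = stdNormalPDF u * Real.exp (-(x*(t+u))/2) := by
    simp only [stdNormalPDF]
    rw [mul_assoc, ← Real.exp_add]
    congr 1
    rw [hu]; ring
  have e2 : 1 - x * t ≤ Real.exp (-(x*(t+u))/2) := by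
    have h1 := Real.add_one_le_exp (-(x*(t+u))/2)
    nlinarith
  have hpu : 0 ≤ stdNormalPDF u := pdf_nonneg u
  have step1 : stdNormalPDF u - stdNormalPDF t ≤ x * t * stdNormalPDF u := by
    have : stdNormalPDF u * (1 - x*t) ≤ stdNormalPDF t := by
      rw [e1]
      exact mul_le_mul_of_nonneg_left e2 hpu
    nlinarith
  have step2 : stdNormalPDF u ≤ stdNormalPDF (t/2) := by
    simp only [stdNormalPDF]
    apply mul_le_mul_of_nonneg_left _ (by positivity)
    apply Real.exp_le_exp.mpr
    have : (t/2)^2 ≤ u^2 := by nlinarith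
    linarith
  have step3 := tsq_pdf_half_le t
  have hpt : 0 ≤ stdNormalPDF (t/2) := pdf_nonneg _
  nlinarith [mul_le_mul_of_nonneg_left step1 ht.le,
    mul_le_mul_of_nonneg_left step2 (mul_nonneg hx (sq_nonneg t)),
    mul_le_mul_of_nonneg_left step3 hx]

/-- The pointwise bound. -/
lemma pointwise_bound (t x : ℝ) (ht : 0 < t) (hx : 0 ≤ x) :
    x ^ 2 * stdNormalQ (x - t) + t ^ 2 * stdNormalQ (t - x) ≤
      (t + 2 + 1 / Real.sqrt (2 * Real.pi)) * x + t * stdNormalPDF t := by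
  set c : ℝ := 1 / Real.sqrt (2 * Real.pi) with hc
  have hc0 : 0 < c := by rw [hc]; positivity
  have hc1 : c ≤ 1 := by
    rw [hc, div_le_one sqrt2pi_pos]; exact one_le_sqrt2pi
  have hQsum : stdNormalQ (x - t) + stdNormalQ (t - x) = 1 := by
    have := Q_add_Q_neg (x - t)
    rwa [show -(x - t) = t - x by ring] at this
  rcases le_total x t with hcase | hcase
  · -- x ≤ t
    set r : ℝ := t - x with hr
    have hr0 : 0 ≤ r := by rw [hr]; linarith
    have hmills : r * stdNormalQ r ≤ stdNormalPDF r := mills r hr0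
    have hQ1 : stdNormalQ (x - t) = 1 - stdNormalQ r := by rw [hr]; linarith
    have hQr0 : 0 ≤ stdNormalQ r := Q_nonneg r
    have hQr1 : stdNormalQ r ≤ 1 := Q_le_one r
    have hlhs : x ^ 2 * stdNormalQ (x - t) + t ^ 2 * stdNormalQ (t - x)
        = x ^ 2 + (t + x) * (r * stdNormalQ r) := by
      rw [hQ1, hr]; ring
    have hphir : stdNormalPDF r ≤ c := pdf_le r
    have hkey : t * stdNormalPDF r ≤ t * stdNormalPDF t + 2 * x := by
      rcases le_total (2*x) t with hsub | hsub
      · rw [hr]; exact key_small t x ht hx hsub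
      · have h1 : t * stdNormalPDF r ≤ t * c :=
          mul_le_mul_of_nonneg_left hphir ht.le
        have h2 : 0 ≤ t * stdNormalPDF t := mul_nonneg ht.le (pdf_nonneg t)
        nlinarith
    have hbd : (t + x) * (r * stdNormalQ r) ≤ (t + x) * stdNormalPDF r :=
      mul_le_mul_of_nonneg_left hmills (by linarith)
    have hxr : x * stdNormalPDF r ≤ x * c :=
      mul_le_mul_of_nonneg_left hphir hx
    nlinarith [pdf_nonneg r]
  · -- t ≤ x
    set s : ℝ := x - t with hs
    have hs0 : 0 ≤ s := by rw [hs]; linarith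
    have hmills : s * stdNormalQ s ≤ stdNormalPDF s := mills s hs0
    have hQ1 : stdNormalQ (t - x) = 1 - stdNormalQ s := by rw [hs]; linarith
    have hlhs : x ^ 2 * stdNormalQ (x - t) + t ^ 2 * stdNormalQ (t - x)
        = t ^ 2 + (x + t) * (s * stdNormalQ s) := by
      rw [hQ1, hs]; ring
    have hphis : stdNormalPDF s ≤ c := pdf_le s
    have hbd : (x + t) * (s * stdNormalQ s) ≤ (x + t) * c := by
      calc (x + t) * (s * stdNormalQ s) ≤ (x + t) * stdNormalPDF s :=
            mul_le_mul_of_nonneg_left hmills (by linarith)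
        _ ≤ (x + t) * c := mul_le_mul_of_nonneg_left hphis (by linarith)
    have h2 : 0 ≤ t * stdNormalPDF t := mul_nonneg ht.le (pdf_nonneg t)
    nlinarith

theorem expectation_Q_bound {Ω : Type*} [MeasurableSpace Ω] (P : Measure Ω)
    [IsProbabilityMeasure P] (X : Ω → ℝ) (hX : Integrable X P)
    (hXpos : ∀ᵐ ω ∂P, 0 ≤ X ω) {E : ℝ} (hE : 0 < E) (hmean : ∫ ω, X ω ∂P ≤ E)
    {t : ℝ} (ht : 0 < t) :
    ∫ ω, ((X ω) ^ 2 * stdNormalQ (X ω - t) + t ^ 2 * stdNormalQ (t - X ω)) ∂P ≤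
      E * t + t * stdNormalPDF t + (2 + 1 / Real.sqrt (2 * Real.pi)) * E := by
  set c : ℝ := 1 / Real.sqrt (2 * Real.pi) with hc
  have hc0 : 0 < c := by rw [hc]; positivity
  set g : Ω → ℝ := fun ω => (t + 2 + c) * X ω + t * stdNormalPDF t with hg
  have hgint : Integrable g P := (hX.const_mul _).add (integrable_const _)
  have hstep : ∫ ω, ((X ω) ^ 2 * stdNormalQ (X ω - t) + t ^ 2 * stdNormalQ (t - X ω)) ∂P
      ≤ ∫ ω, g ω ∂P := by
    apply integral_mono_of_nonneg _ hgint
    · filter_upwards [hXpos] with ω hω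
      exact pointwise_bound t (X ω) ht hω
    · filter_upwards with ω
      have h1 := Q_nonneg (X ω - t)
      have h2 := Q_nonneg (t - X ω)
      positivity
  have hgval : ∫ ω, g ω ∂P = (t + 2 + c) * (∫ ω, X ω ∂P) + t * stdNormalPDF t := by
    rw [hg, integral_add (hX.const_mul _) (integrable_const _), integral_const_mul,
      integral_const]
    simp
  have hcoef : 0 < t + 2 + c := by linarith
  have hfin : (t + 2 + c) * (∫ ω, X ω ∂P) ≤ (t + 2 + c) * E :=
    mul_le_mul_of_nonneg_left hmean hcoef.le
  calc ∫ ω, ((X ω) ^ 2 * stdNormalQ (X ω - t) + t ^ 2 * stdNormalQ (t - X ω)) ∂P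
      ≤ (t + 2 + c) * (∫ ω, X ω ∂P) + t * stdNormalPDF t := by rw [← hgval]; exact hstep
    _ ≤ (t + 2 + c) * E + t * stdNormalPDF t := by linarith
    _ = E * t + t * stdNormalPDF t + (2 + c) * E := by ring
end

section
/- Fix a > 0. Then lim_{E → 0⁺} H_b( E / (a·√(log(1/E))) ) / ( E·√(log(1/E)) ) = 1/a, where H_b is the binary entropy function. -/
open Filter

/-- The binary entropy function (natural logarithm). -/
noncomputable def binEntropy (p : ℝ) : ℝ :=
  -p * Real.log p - (1 - p) * Real.log (1 - p)

private lemma aux_log1p :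
    Tendsto (fun h : ℝ => Real.log (1 + h) / h) (nhdsWithin 0 {(0:ℝ)}ᶜ) (nhds 1) := by
  have hinner : HasDerivAt (fun h : ℝ => 1 + h) 1 0 := (hasDerivAt_id (0:ℝ)).const_add 1
  have hlog : HasDerivAt Real.log 1 (1 + (0:ℝ)) := by
    simpa using Real.hasDerivAt_log one_ne_zero
  have h0 : HasDerivAt (fun h : ℝ => Real.log (1 + h)) 1 0 := by
    have h := hlog.comp 0 hinner
    rw [mul_one] at h
    exact h
  have h2 := hasDerivAt_iff_tendsto_slope.mp h0
  have he : ∀ x : ℝ, slope (fun h : ℝ => Real.log (1 + h)) 0 x = Real.log (1 + x) / x := by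
    intro x; simp [slope_def_field]
  rw [tendsto_congr he] at h2
  exact h2

private lemma aux_bracket :
    Tendsto (fun q : ℝ => -(1 - q) * Real.log (1 - q) / q) (nhdsWithin 0 {(0:ℝ)}ᶜ) (nhds 1) := by
  have hneg : Tendsto (fun q : ℝ => -q) (nhdsWithin 0 {(0:ℝ)}ᶜ) (nhdsWithin 0 {(0:ℝ)}ᶜ) := by
    apply Filter.Tendsto.inf
    · simpa using (continuous_neg.tendsto (0:ℝ))
    · apply tendsto_principal_principal.mpr
      intro x hx
      simpa using hx
  have h1 : Tendsto (fun q : ℝ => Real.log (1 + -q) / -q) (nhdsWithin 0 {(0:ℝ)}ᶜ) (nhds 1) :=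
    aux_log1p.comp hneg
  have h2 : Tendsto (fun q : ℝ => (1 - q) * (Real.log (1 + -q) / -q))
      (nhdsWithin 0 {(0:ℝ)}ᶜ) (nhds (1 * 1)) := by
    apply Filter.Tendsto.mul _ h1
    have : Tendsto (fun q : ℝ => 1 - q) (nhds 0) (nhds 1) := by
      have h : Tendsto (fun q : ℝ => (1:ℝ) - q) (nhds 0) (nhds (1 - 0)) :=
        tendsto_const_nhds.sub tendsto_id
      rw [sub_zero] at h
      exact h
    exact this.mono_left nhdsWithin_le_nhds
  rw [mul_one] at h2
  refine h2.congr (fun q => ?_)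
  rw [show (1:ℝ) + -q = 1 - q by ring]
  ring

private lemma aux_g {a : ℝ} (ha : 0 < a) :
    Tendsto (fun s : ℝ => (s + Real.log a + (1/2) * Real.log s) / (a * s)) atTop
      (nhds (1/a)) := by
  have hlog : Tendsto (fun s : ℝ => Real.log s / s) atTop (nhds 0) :=
    Real.isLittleO_log_id_atTop.tendsto_div_nhds_zero
  have hinv : Tendsto (fun s : ℝ => s⁻¹) atTop (nhds 0) := tendsto_inv_atTop_zero
  have h : Tendsto (fun s : ℝ => 1/a + (Real.log a / a) * s⁻¹ + (1/(2*a)) * (Real.log s / s))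
      atTop (nhds (1/a + (Real.log a / a) * 0 + (1/(2*a)) * 0)) :=
    ((tendsto_const_nhds.add (tendsto_const_nhds.mul hinv)).add (tendsto_const_nhds.mul hlog))
  rw [show 1/a + (Real.log a / a) * 0 + (1/(2*a)) * 0 = 1/a by ring] at h
  apply h.congr'
  filter_upwards [eventually_gt_atTop (0:ℝ)] with s hs
  field_simp

theorem binEntropy_asymptotic {a : ℝ} (ha : 0 < a) :
    Filter.Tendsto
      (fun E : ℝ =>
        binEntropy (E / (a * Real.sqrt (Real.log (1 / E)))) /
          (E * Real.sqrt (Real.log (1 / E))))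
      (nhdsWithin 0 (Set.Ioi 0)) (nhds (1 / a)) := by
  set t : ℝ → ℝ := fun E => Real.log (1 / E) with ht_def
  set p : ℝ → ℝ := fun E => E / (a * Real.sqrt (t E)) with hp_def
  have ht : Tendsto t (nhdsWithin 0 (Set.Ioi 0)) atTop := by
    simp only [ht_def, one_div, Real.log_inv]
    exact tendsto_neg_atBot_atTop.comp Real.tendsto_log_nhdsGT_zero
  -- eventual basic facts
  have hE_pos : ∀ᶠ E : ℝ in nhdsWithin 0 (Set.Ioi 0), 0 < E := by
    filter_upwards [eventually_mem_nhdsWithin] with E hE using hE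
  have ht_big : ∀ᶠ E in nhdsWithin 0 (Set.Ioi 0), max 1 (a⁻¹ ^ 2) ≤ t E :=
    ht.eventually_ge_atTop _
  have hfacts : ∀ᶠ E in nhdsWithin 0 (Set.Ioi 0),
      0 < E ∧ 0 < t E ∧ 1 ≤ a * Real.sqrt (t E) := by
    filter_upwards [hE_pos, ht_big] with E hE hbig
    have h1 : (1:ℝ) ≤ t E := le_trans (le_max_left _ _) hbig
    have h2 : a⁻¹ ^ 2 ≤ t E := le_trans (le_max_right _ _) hbig
    refine ⟨hE, lt_of_lt_of_le one_pos h1, ?_⟩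
    have : a⁻¹ ≤ Real.sqrt (t E) := by
      have := Real.sqrt_le_sqrt h2
      rwa [Real.sqrt_sq (le_of_lt (inv_pos.mpr ha))] at this
    calc (1:ℝ) = a * a⁻¹ := by field_simp
      _ ≤ a * Real.sqrt (t E) := by
          exact mul_le_mul_of_nonneg_left this (le_of_lt ha)
  -- p tends to 0 within {0}ᶜ
  have hp0 : Tendsto p (nhdsWithin 0 (Set.Ioi 0)) (nhds 0) := by
    have hid : Tendsto (fun E : ℝ => E) (nhdsWithin 0 (Set.Ioi 0)) (nhds 0) :=
      tendsto_id.mono_right nhdsWithin_le_nhds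
    apply tendsto_of_tendsto_of_tendsto_of_le_of_le' tendsto_const_nhds hid
    · filter_upwards [hfacts] with E ⟨hE, ht0, hd⟩
      exact le_of_lt (div_pos hE (lt_of_lt_of_le one_pos hd))
    · filter_upwards [hfacts] with E ⟨hE, ht0, hd⟩
      calc p E ≤ E / 1 := by
            apply div_le_div_of_nonneg_left (le_of_lt hE) one_pos hd
            -- maybe wrong lemma; fix below
        _ = E := div_one E
  have hp : Tendsto p (nhdsWithin 0 (Set.Ioi 0)) (nhdsWithin 0 {(0:ℝ)}ᶜ) := by
    rw [tendsto_nhdsWithin_iff]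
    refine ⟨hp0, ?_⟩
    filter_upwards [hfacts] with E ⟨hE, ht0, hd⟩
    exact ne_of_gt (div_pos hE (lt_of_lt_of_le one_pos hd))
  -- limit of the two summands
  have hA : Tendsto (fun E => (t E + Real.log a + (1/2) * Real.log (t E)) / (a * t E))
      (nhdsWithin 0 (Set.Ioi 0)) (nhds (1/a)) := (aux_g ha).comp ht
  have hatinv : Tendsto (fun E => (a * t E)⁻¹) (nhdsWithin 0 (Set.Ioi 0)) (nhds 0) :=
    tendsto_inv_atTop_zero.comp (ht.const_mul_atTop ha)
  have hB : Tendsto (fun E => (-(1 - p E) * Real.log (1 - p E) / p E) * (a * t E)⁻¹)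
      (nhdsWithin 0 (Set.Ioi 0)) (nhds (1 * 0)) :=
    (aux_bracket.comp hp).mul hatinv
  rw [mul_zero] at hB
  have hsum := hA.add hB
  rw [add_zero] at hsum
  apply hsum.congr'
  filter_upwards [hfacts] with E ⟨hE, ht0, hd⟩
  have hs : 0 < Real.sqrt (t E) := Real.sqrt_pos.mpr ht0
  have hs2 : Real.sqrt (t E) * Real.sqrt (t E) = t E := Real.mul_self_sqrt (le_of_lt ht0)
  have hlogE : Real.log E = -t E := by
    simp only [ht_def, one_div, Real.log_inv]; ring
  have hlogp : Real.log (p E) = -t E - Real.log a - Real.log (t E) / 2 := by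
    rw [hp_def]
    rw [Real.log_div (ne_of_gt hE) (ne_of_gt (mul_pos ha hs)),
      Real.log_mul (ne_of_gt ha) (ne_of_gt hs), Real.log_sqrt (le_of_lt ht0), hlogE]
    ring
  show (t E + Real.log a + (1/2) * Real.log (t E)) / (a * t E)
      + (-(1 - p E) * Real.log (1 - p E) / p E) * (a * t E)⁻¹
    = binEntropy (p E) / (E * Real.sqrt (t E))
  rw [binEntropy, hlogp]
  rw [hp_def]
  set s := Real.sqrt (t E) with hs_def
  have htss : t E = s * s := hs2.symm
  rw [htss]
  set X := Real.log (s * s) with hX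
  set Y := Real.log (1 - E / (a * s)) with hY
  field_simp
  ring
end

section
/- Fix a dark current λ > 0 and a > 1. For E > 0 small, let η₀(E) be the unique real number s > λ satisfying s·log(s/λ) = a·log(1/E). Then lim_{E → 0⁺} H_b( E / η₀(E) ) / ( E·log log(1/E) ) = 1/a, where H_b is the binary entropy function. -/
open Filter Set Topology

theorem binEntropy_poisson_asymptotic {lam a : ℝ} (hlam : 0 < lam) (ha : 1 < a)
    (η₀ : ℝ → ℝ)
    (hη₀ : ∀ E ∈ Set.Ioo (0 : ℝ) 1,
      lam < η₀ E ∧ η₀ E * Real.log (η₀ E / lam) = a * Real.log (1 / E)) :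
    Filter.Tendsto
      (fun E : ℝ => binEntropy (E / η₀ E) / (E * Real.log (Real.log (1 / E))))
      (nhdsWithin 0 (Set.Ioi 0)) (nhds (1 / a)) := by
  have ha0 : (0:ℝ) < a := one_pos.trans ha
  set l : Filter ℝ := nhdsWithin 0 (Set.Ioi 0) with hl
  set m : ℝ → ℝ := fun E => Real.log (Real.log (1/E)) with hm
  set c : ℝ := Real.log a - Real.log lam with hc
  have hLtop : Tendsto (fun E : ℝ => Real.log (1/E)) l atTop := by
    have h1 : Tendsto (fun E : ℝ => E⁻¹) l atTop := tendsto_inv_nhdsGT_zero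
    have h2 : Tendsto (fun E : ℝ => Real.log (E⁻¹)) l atTop :=
      Real.tendsto_log_atTop.comp h1
    simpa [one_div] using h2
  have hMtop : Tendsto m l atTop := Real.tendsto_log_atTop.comp hLtop
  have hmem : ∀ᶠ E in l, E ∈ Set.Ioo (0:ℝ) 1 :=
    Ioo_mem_nhdsGT_of_mem (Set.left_mem_Ico.mpr one_pos)
  -- η₀ tends to infinity
  have hηtop : Tendsto η₀ l atTop := by
    rw [tendsto_atTop]
    intro M
    have hev : ∀ᶠ E in l,
        max M lam * Real.log (max M lam / lam) < a * Real.log (1/E) :=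
      (hLtop.const_mul_atTop ha0).eventually_gt_atTop _
    filter_upwards [hmem, hev] with E hE h2
    obtain ⟨h3, h4⟩ := hη₀ E hE
    by_contra hlt
    push_neg at hlt
    have hη'le : η₀ E ≤ max M lam := hlt.le.trans (le_max_left _ _)
    have hpos : 0 < η₀ E := hlam.trans h3
    have hlog1 : 0 ≤ Real.log (η₀ E / lam) :=
      Real.log_nonneg ((one_le_div hlam).mpr h3.le)
    have hlog2 : Real.log (η₀ E / lam) ≤ Real.log (max M lam / lam) := by
      gcongr
    have h5 : η₀ E * Real.log (η₀ E / lam) ≤ max M lam * Real.log (max M lam / lam) :=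
      mul_le_mul hη'le hlog2 hlog1 (hlam.le.trans (le_max_right _ _))
    rw [h4] at h5
    linarith
  have hE2 : ∀ᶠ E in l, 2 ≤ η₀ E := hηtop.eventually_ge_atTop 2
  have hEe : ∀ᶠ E in l, lam * Real.exp 1 ≤ η₀ E := hηtop.eventually_ge_atTop _
  have hm1 : ∀ᶠ E in l, 1 ≤ m E := hMtop.eventually_ge_atTop 1
  have hL1 : ∀ᶠ E in l, 1 ≤ Real.log (1/E) := hLtop.eventually_ge_atTop 1
  have haL : ∀ᶠ E in l, lam * Real.exp 1 ≤ a * Real.log (1/E) :=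
    (hLtop.const_mul_atTop ha0).eventually_ge_atTop _
  -- key sandwich for log(η/λ)/m
  have key : ∀ᶠ E in l,
      (c + m E - Real.log (c + m E)) / m E ≤ Real.log (η₀ E / lam) / m E ∧
      Real.log (η₀ E / lam) / m E ≤ (c + m E) / m E := by
    filter_upwards [hmem, hEe, hm1, hL1, haL] with E hE he hm1 hL1 haL
    obtain ⟨hgl, heq⟩ := hη₀ E hE
    have hηpos : 0 < η₀ E := hlam.trans hgl
    have hmpos : (0:ℝ) < m E := lt_of_lt_of_le one_pos hm1
    have hLpos : (0:ℝ) < Real.log (1/E) := lt_of_lt_of_le one_pos hL1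
    have hTeq : Real.log (a * Real.log (1/E) / lam) = c + m E := by
      rw [hc, Real.log_div (by positivity) (ne_of_gt hlam),
        Real.log_mul (ne_of_gt ha0) (ne_of_gt hLpos), hm]
      ring
    have hlog1 : 1 ≤ Real.log (η₀ E / lam) := by
      rw [Real.le_log_iff_exp_le (by positivity)]
      rw [le_div_iff₀ hlam]
      linarith [he]
    have hηle : η₀ E ≤ a * Real.log (1/E) := by
      rw [← heq]
      nlinarith
    have hT1 : 1 ≤ c + m E := by
      rw [← hTeq, Real.le_log_iff_exp_le (by positivity), le_div_iff₀ hlam]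
      linarith [haL]
    have hTpos : (0:ℝ) < c + m E := lt_of_lt_of_le one_pos hT1
    have hub : Real.log (η₀ E / lam) ≤ c + m E := by
      rw [← hTeq]
      gcongr
    have hlb : a * Real.log (1/E) ≤ η₀ E * (c + m E) := by
      rw [← heq]
      nlinarith
    have hlow : c + m E - Real.log (c + m E) ≤ Real.log (η₀ E / lam) := by
      have h7 : (a * Real.log (1/E) / lam) / (c + m E) ≤ η₀ E / lam := by
        rw [div_le_div_iff₀ (by positivity) hlam]
        have hpaL : (0:ℝ) < a * Real.log (1/E) := by positivity
        calc a * Real.log (1/E) / lam * lam = a * Real.log (1/E) := by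
              field_simp
          _ ≤ η₀ E * (c + m E) := hlb
      have h8 : Real.log ((a * Real.log (1/E) / lam) / (c + m E))
          ≤ Real.log (η₀ E / lam) := by
        gcongr
      rw [Real.log_div (by positivity) (ne_of_gt hTpos), hTeq] at h8
      linarith
    constructor
    · gcongr
    · gcongr
  -- limits of the two bounds
  have hinv : Tendsto (fun E => (m E)⁻¹) l (𝓝 0) := hMtop.inv_tendsto_atTop
  have hmne : ∀ᶠ E in l, m E ≠ 0 := by
    filter_upwards [hm1] with E h; linarith
  have h_upper : Tendsto (fun E => (c + m E) / m E) l (𝓝 1) := by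
    have h1 : Tendsto (fun E => c * (m E)⁻¹ + 1) l (𝓝 1) := by
      have := (hinv.const_mul c).add (tendsto_const_nhds (x := (1:ℝ)))
      simpa using this
    refine h1.congr' ?_
    filter_upwards [hmne] with E hE
    field_simp
  have hcm : Tendsto (fun E => c + m E) l atTop := tendsto_atTop_add_const_left _ c hMtop
  have h_logT : Tendsto (fun E => Real.log (c + m E) / m E) l (𝓝 0) := by
    have h1 : Tendsto (fun E => Real.log (c + m E) / (c + m E)) l (𝓝 0) :=
      (Real.isLittleO_log_id_atTop.tendsto_div_nhds_zero).comp hcm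
    have h2 := h1.mul h_upper
    rw [zero_mul] at h2
    refine h2.congr' ?_
    filter_upwards [hmne, hcm.eventually_ne_atTop 0] with E h1 h2
    field_simp
  have h_lower : Tendsto (fun E => (c + m E - Real.log (c + m E)) / m E) l (𝓝 1) := by
    have := h_upper.sub h_logT
    rw [sub_zero] at this
    refine this.congr fun E => ?_
    rw [← sub_div]
  have hr : Tendsto (fun E => Real.log (η₀ E / lam) / m E) l (𝓝 1) :=
    tendsto_of_tendsto_of_tendsto_of_le_of_le' h_lower h_upper
      (key.mono fun E h => h.1) (key.mono fun E h => h.2)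
  have hf2 : Tendsto (fun E => Real.log (η₀ E / lam) / (a * m E)) l (𝓝 (1/a)) := by
    have := hr.div_const a
    refine this.congr fun E => ?_
    rw [div_div, mul_comm]
  -- first term tends to 0
  have hf1 : Tendsto (fun E => Real.log (η₀ E) / (η₀ E * m E)) l (𝓝 0) := by
    refine tendsto_of_tendsto_of_tendsto_of_le_of_le' tendsto_const_nhds hinv ?_ ?_
    · filter_upwards [hE2, hm1] with E h2 hm1
      have : 0 ≤ Real.log (η₀ E) := Real.log_nonneg (by linarith)
      positivity
    · filter_upwards [hE2, hm1] with E h2 hm1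
      have hηpos : (0:ℝ) < η₀ E := by linarith
      have hmpos : (0:ℝ) < m E := by linarith
      have hlog : Real.log (η₀ E) ≤ η₀ E := by
        have := Real.log_le_sub_one_of_pos hηpos
        linarith
      calc Real.log (η₀ E) / (η₀ E * m E) ≤ η₀ E / (η₀ E * m E) := by gcongr
        _ = (m E)⁻¹ := by field_simp
  -- third term tends to 0
  have hf3 : Tendsto (fun E => (-(1 - E/η₀ E) * Real.log (1 - E/η₀ E)) / (E * m E)) l (𝓝 0) := by
    have h2inv : Tendsto (fun E => 2 * (m E)⁻¹) l (𝓝 0) := by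
      have := hinv.const_mul 2
      simpa using this
    refine tendsto_of_tendsto_of_tendsto_of_le_of_le' tendsto_const_nhds h2inv ?_ ?_
    · filter_upwards [hmem, hE2, hm1] with E hE h2 hm1
      have hEpos : 0 < E := hE.1
      have hηpos : (0:ℝ) < η₀ E := by linarith
      have hmpos : (0:ℝ) < m E := by linarith
      have hp : E / η₀ E < 1/2 := by
        rw [div_lt_iff₀ hηpos]
        nlinarith [hE.2]
      have hppos : 0 < E / η₀ E := by positivity
      have hlogq : Real.log (1 - E/η₀ E) ≤ 0 :=
        Real.log_nonpos (by linarith) (by linarith)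
      have hrw : -(1 - E/η₀ E) * Real.log (1 - E/η₀ E)
          = (1 - E/η₀ E) * (-Real.log (1 - E/η₀ E)) := by ring
      rw [hrw]
      apply div_nonneg
      · exact mul_nonneg (by linarith) (by linarith)
      · positivity
    · filter_upwards [hmem, hE2, hm1] with E hE h2 hm1
      have hEpos : 0 < E := hE.1
      have hηpos : (0:ℝ) < η₀ E := by linarith
      have hmpos : (0:ℝ) < m E := by linarith
      set p := E / η₀ E with hpdef
      have hp : p < 1/2 := by
        rw [hpdef, div_lt_iff₀ hηpos]
        nlinarith [hE.2]
      have hppos : 0 < p := by rw [hpdef]; positivity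
      have hpE : p ≤ E / 2 := by
        rw [hpdef]
        gcongr
      set q := 1 - p with hqdef
      have hqpos : (0:ℝ) < q := by rw [hqdef]; linarith
      have hA : -Real.log q ≤ q⁻¹ - 1 := by
        have := Real.log_le_sub_one_of_pos (x := q⁻¹) (by positivity)
        rwa [Real.log_inv] at this
      have hC : q * (-Real.log q) ≤ q * (q⁻¹ - 1) :=
        mul_le_mul_of_nonneg_left hA hqpos.le
      have hD : q * (q⁻¹ - 1) = 1 - q := by field_simp
      have hN : -(1 - p) * Real.log (1 - p) ≤ 2 * E := by
        have : -(1 - p) * Real.log (1 - p) = q * (-Real.log q) := by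
          rw [hqdef]; ring
        rw [this]
        have : (1:ℝ) - q = p := by rw [hqdef]; ring
        nlinarith
      calc -(1 - p) * Real.log (1 - p) / (E * m E) ≤ 2 * E / (E * m E) := by gcongr
        _ = 2 * (m E)⁻¹ := by field_simp
  -- assemble
  have hsum := (hf1.add hf2).add hf3
  rw [zero_add, add_zero] at hsum
  refine hsum.congr' ?_
  filter_upwards [hmem, hE2, hm1] with E hE h2 hm1
  obtain ⟨hgl, heq⟩ := hη₀ E hE
  have hηpos : (0:ℝ) < η₀ E := hlam.trans hgl
  have hEpos : 0 < E := hE.1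
  have hmpos : (0:ℝ) < m E := by linarith
  rw [one_div, Real.log_inv] at heq
  have hlogratio : Real.log (η₀ E / lam) = a * -Real.log E / η₀ E := by
    rw [eq_div_iff (ne_of_gt hηpos)]
    linarith [heq]
  rw [binEntropy, Real.log_div (ne_of_gt hEpos) (ne_of_gt hηpos), hlogratio]
  generalize (1 - E / η₀ E) = q
  show _ = (_ - _)/(E * m E)
  field_simp
  ring
end
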